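/- arXiv:1809.09036 — 2 statements merged into one kernel-verified Lean document; each statement's English description precedes it below -/
import Mathlib

section
/- For all integers 0 ≤ k ≤ n, the product {k}!·{n-k}! divides {n}! in Z[s,t], and the quotient, i.e. the Lucasnomial {n choose k}_L, is a polynomial in s and t all of whose coefficients are nonnegative integers. (Formally: there exists a polynomial p ∈ Z[s,t] with all coefficients nonnegative such that {n}! = p·{k}!·{n-k}!.) -/
open MvPolynomial Finset

noncomputable section

/-- Polynomial ring ℤ[s,t] with s = X 0, t = X 1. -/
abbrev P2 : Type := MvPolynomial (Fin 2) ℤ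

def ps : P2 := X 0
def pt : P2 := X 1

/-- The Lucas sequence of polynomials: {0}=0, {1}=1, {n}=s{n-1}+t{n-2}. -/
def lucas : ℕ → P2
  | 0 => 0
  | 1 => 1
  | (n+2) => ps * lucas (n+1) + pt * lucas n

/-- The Lucastorial {n}! = {1}{2}⋯{n}. -/
def lucasFact (n : ℕ) : P2 := ∏ i ∈ Finset.range n, lucas (i+1)

/-- The d-divisible Lucastorial {n:d}! = {d}{2d}⋯{nd}. -/
def lucasFactD (d n : ℕ) : P2 := ∏ i ∈ Finset.range n, lucas (d*(i+1))

/-- A polynomial lies in ℕ[s,t]: all coefficients are nonnegative. -/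
def Nonneg (p : P2) : Prop := ∀ m, 0 ≤ p.coeff m

/-- The fraction field ℤ(s,t). -/
abbrev K : Type := FractionRing P2

def φ : P2 →+* K := algebraMap P2 K

def L (n : ℕ) : K := φ (lucas n)

def LFact (n : ℕ) : K := φ (lucasFact n)

def LFactD (d n : ℕ) : K := φ (lucasFactD d n)

/-- The Lucasnomial {n choose k}, as an element of the fraction field. -/
def lnom (n k : ℕ) : K := LFact n / (LFact k * LFact (n-k))

/-- The d-divisible Lucasnomial {n:d choose k:d}, as an element of the fraction field. -/
def lnomD (d n k : ℕ) : K := LFactD d n / (LFactD d k * LFactD d (n-k))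

/-- The Lucas-Catalan number C_{n} = (1/{n+1}) {2n choose n}. -/
def catL (n : ℕ) : K := lnom (2*n) n / L (n+1)

/-- The Lucas-Fuss-Catalan number C_{n,k} = (1/{kn+1}) {(k+1)n choose n}. -/
def fussCatL (n k : ℕ) : K := lnom ((k+1)*n) n / L (k*n+1)


lemma nnAdd {p q : P2} (hp : Nonneg p) (hq : Nonneg q) : Nonneg (p + q) := by
  intro m
  simp only [MvPolynomial.coeff_add]
  exact add_nonneg (hp m) (hq m)

lemma nnMul {p q : P2} (hp : Nonneg p) (hq : Nonneg q) : Nonneg (p * q) := by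
  intro m
  rw [MvPolynomial.coeff_mul]
  exact Finset.sum_nonneg fun x _ => mul_nonneg (hp _) (hq _)

lemma nonneg_one : Nonneg (1 : P2) := by
  intro m
  classical
  rw [MvPolynomial.coeff_one]
  split <;> norm_num

lemma nonneg_zero : Nonneg (0 : P2) := fun m => le_of_eq (by simp)

lemma nonneg_X (i : Fin 2) : Nonneg (X i : P2) := by
  intro m
  classical
  rw [MvPolynomial.coeff_X']
  split <;> norm_num

lemma nonneg_ps : Nonneg ps := nonneg_X 0
lemma nonneg_pt : Nonneg pt := nonneg_X 1

lemma lucas_nonneg : ∀ n, Nonneg (lucas n) := by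
  intro n
  induction n using Nat.strong_induction_on with
  | _ n ih =>
    match n with
    | 0 => exact nonneg_zero
    | 1 => exact nonneg_one
    | (n+2) =>
      rw [lucas]
      exact nnAdd (nnMul nonneg_ps (ih (n+1) (by omega)))
        (nnMul nonneg_pt (ih n (by omega)))

lemma lucas_step (n : ℕ) : lucas (n + 2) = ps * lucas (n + 1) + pt * lucas n := by
  rw [lucas]

lemma lucas_add : ∀ m n : ℕ, lucas (m + n + 1) =
    lucas (m + 1) * lucas (n + 1) + pt * (lucas m * lucas n) := by
  intro m
  induction m using Nat.strong_induction_on with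
  | _ m ih =>
    match m with
    | 0 => intro n; simp [lucas]
    | 1 =>
      intro n
      have h2 : lucas 2 = ps := by rw [lucas, lucas, lucas]; ring
      have h1 : lucas 1 = 1 := by rw [lucas]
      rw [show (1:ℕ) + n + 1 = n + 2 from by omega, show (1:ℕ) + 1 = 2 from rfl,
        h2, h1, lucas_step n]
      ring
    | (m+2) =>
      intro n
      have h1 := ih (m+1) (by omega) n
      have h0 := ih m (by omega) n
      have e1 : m + 2 + n + 1 = (m + n + 1) + 2 := by omega
      have e2 : m + n + 1 + 1 = (m + 1) + n + 1 := by omega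
      have e3 : m + 2 + 1 = (m + 1) + 2 := by omega
      have e4 : m + 1 + 1 = m + 2 := by omega
      rw [e1, lucas_step (m+n+1), e2, h1, h0, e3, lucas_step (m+1), e4, lucas_step m]
      ring

lemma lucasFact_succ (n : ℕ) : lucasFact (n + 1) = lucasFact n * lucas (n + 1) := by
  rw [lucasFact, lucasFact, Finset.prod_range_succ]

lemma lucasnomial_nonneg_aux : ∀ n k : ℕ, k ≤ n →
    ∃ p : P2, Nonneg p ∧ lucasFact n = p * (lucasFact k * lucasFact (n-k)) := by
  intro n
  induction n using Nat.strong_induction_on with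
  | _ n ih =>
    intro k hk
    rcases Nat.eq_zero_or_pos k with rfl | hk0
    · exact ⟨1, nonneg_one, by simp [lucasFact]⟩
    rcases eq_or_lt_of_le hk with rfl | hkn
    · refine ⟨1, nonneg_one, ?_⟩
      simp [show k - k = 0 from by omega, lucasFact]
    obtain ⟨j, rfl⟩ : ∃ j, k = j + 1 := ⟨k - 1, by omega⟩
    obtain ⟨n', rfl⟩ : ∃ n', n = n' + 1 := ⟨n - 1, by omega⟩
    have hjn : j + 1 ≤ n' := by omega
    obtain ⟨p1, hp1n, hp1⟩ := ih n' (by omega) (j+1) hjn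
    obtain ⟨p2, hp2n, hp2⟩ := ih n' (by omega) j (by omega)
    obtain ⟨m, hm⟩ : ∃ m, n' - j = m + 1 := ⟨n' - j - 1, by omega⟩
    refine ⟨lucas (j+1+1) * p1 + pt * lucas m * p2, ?_, ?_⟩
    · exact nnAdd (nnMul (lucas_nonneg _) hp1n)
        (nnMul (nnMul nonneg_pt (lucas_nonneg _)) hp2n)
    · rw [show n' + 1 - (j+1) = m + 1 from by omega]
      rw [show n' - (j+1) = m from by omega] at hp1
      rw [hm] at hp2
      have hmj : n' = j + 1 + m := by omega
      subst hmj
      rw [lucasFact_succ j] at hp1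
      rw [lucasFact_succ m] at hp2
      rw [lucasFact_succ (j+1+m), lucas_add (j+1) m, lucasFact_succ j, lucasFact_succ m]
      linear_combination (lucas (j+1+1) * lucas (m+1)) * hp1 +
        (pt * (lucas (j+1) * lucas m)) * hp2

/-- {k}!{n-k}! divides {n}! with quotient (the Lucasnomial) in ℕ[s,t]. -/
theorem lucasnomial_nonneg (n k : ℕ) (hk : k ≤ n) :
    ∃ p : P2, Nonneg p ∧ lucasFact n = p * (lucasFact k * lucasFact (n-k)) := lucasnomial_nonneg_aux n k hk
end
end

section
/- For all positive integers m and n, the Lucas polynomial {gcd(m,n)} is a greatest common divisor of {m} and {n} in the ring Z[s,t]; that is, {gcd(m,n)} divides both {m} and {n}, and every common divisor of {m} and {n} in Z[s,t] divides {gcd(m,n)}. -/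
open MvPolynomial Finset

noncomputable section

lemma lucas_two_step (n : ℕ) : lucas (n+2) = ps * lucas (n+1) + pt * lucas n := rfl

lemma lucas_add_one (a b : ℕ) :
    lucas (a + b + 1) = lucas (a+1) * lucas (b+1) + pt * lucas a * lucas b := by
  induction a using Nat.twoStepInduction with
  | zero => simp [lucas]
  | one =>
    rw [show 1+b+1 = b+2 from by ring, lucas_two_step,
      show lucas (1+1) = ps * lucas 1 + pt * lucas 0 from rfl]
    simp [lucas]
  | more a ihn ih1 =>
    have e1 : a + 2 + b + 1 = (a + b + 1) + 2 := by ring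
    have e2 : a + b + 2 = (a + 1) + b + 1 := by ring
    rw [e1, lucas_two_step, show a+b+1+1 = a+1+b+1 from by ring, ih1, ihn,
      lucas_two_step (a+1), lucas_two_step a]
    ring

lemma lucas_dvd_lucas_mul (d k : ℕ) : lucas d ∣ lucas (d * k) := by
  induction k with
  | zero => simp [lucas]
  | succ k ih =>
    rcases Nat.eq_zero_or_pos d with rfl | hd
    · simp [lucas]
    · obtain ⟨e, rfl⟩ : ∃ e, d = e + 1 := ⟨d - 1, by omega⟩
      have : (e+1) * (k+1) = (e+1) * k + e + 1 := by ring
      rw [this, lucas_add_one]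
      exact dvd_add (dvd_mul_left _ _) ((ih.mul_left pt).mul_right (lucas e))

lemma prime_pt : Prime (pt : P2) := by
  have h0 : Prime (X 0 : P2) := by
    rw [← MulEquiv.prime_iff (MvPolynomial.finSuccEquiv ℤ 1).toMulEquiv]
    simpa [MvPolynomial.finSuccEquiv_X_zero] using
      (Polynomial.prime_X : Prime (Polynomial.X (R := MvPolynomial (Fin 1) ℤ)))
  have h1 := (MulEquiv.prime_iff (MvPolynomial.renameEquiv ℤ (Equiv.swap (0 : Fin 2) 1)).toMulEquiv
    (p := (X 0 : P2))).mpr h0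
  simpa [pt, MvPolynomial.renameEquiv_apply, MvPolynomial.rename_X] using h1

/-- evaluation sending t ↦ 0 -/
def ev0 : P2 →+* P2 := (MvPolynomial.aeval (fun i : Fin 2 => if i = 0 then (X 0 : P2) else 0)).toRingHom

lemma ev0_lucas (n : ℕ) : ev0 (lucas (n+1)) = (X 0 : P2) ^ n := by
  induction n using Nat.twoStepInduction with
  | zero => simp [lucas, ev0]
  | one =>
    rw [show lucas 2 = ps * lucas 1 + pt * lucas 0 from rfl]
    simp [lucas, ev0, ps, pt]
  | more n ihn ih1 =>
    rw [lucas_two_step]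
    simp only [map_add, map_mul, ih1, ihn]
    have hs : ev0 ps = X 0 := by simp [ev0, ps]
    have ht : ev0 pt = 0 := by simp [ev0, pt]
    rw [hs, ht]
    ring

lemma pt_not_dvd_lucas (n : ℕ) : ¬ (pt ∣ lucas (n+1)) := by
  rintro ⟨c, hc⟩
  have h := ev0_lucas n
  rw [hc, map_mul] at h
  have ht : ev0 pt = 0 := by simp [ev0, pt]
  rw [ht, zero_mul] at h
  exact pow_ne_zero n (MvPolynomial.X_ne_zero (R := ℤ) (0 : Fin 2)) h.symm

lemma relPrime_lucas_pt (n : ℕ) : IsRelPrime (lucas (n+1)) pt := by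
  intro q hq1 hq2
  obtain ⟨c, hc⟩ := hq2
  rcases (prime_pt.irreducible.isUnit_or_isUnit hc) with h | h
  · exact h
  · exfalso
    apply pt_not_dvd_lucas n
    obtain ⟨u, hu⟩ := h
    have : q = pt * ↑u⁻¹ := by rw [hc, ← hu, mul_assoc, Units.mul_inv, mul_one]
    exact (Dvd.intro _ this.symm).trans hq1

lemma relPrime_lucas_consec (n : ℕ) : IsRelPrime (lucas n) (lucas (n+1)) := by
  induction n with
  | zero => intro q _ hq; exact isUnit_of_dvd_one hq
  | succ n ih =>
    intro q hq1 hq2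
    rw [lucas_two_step] at hq2
    have h3 : q ∣ pt * lucas n := (dvd_add_right (Dvd.dvd.mul_left hq1 ps)).mp hq2
    have hrp : IsRelPrime q pt := fun w hw1 hw2 => relPrime_lucas_pt n (hw1.trans hq1) hw2
    have h4 : q ∣ lucas n := hrp.dvd_of_dvd_mul_left h3
    exact ih h4 hq1

lemma lucas_sub_step (m n : ℕ) (q : P2) (hm : 0 < m) (h : m < n)
    (h1 : q ∣ lucas m) (h2 : q ∣ lucas n) : q ∣ lucas (n - m) := by
  have e : n = (m - 1) + (n - m) + 1 := by omega
  rw [e, lucas_add_one, show m - 1 + 1 = m from by omega] at h2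
  have h3 : q ∣ pt * lucas (m-1) * lucas (n - m) :=
    (dvd_add_right (h1.mul_right _)).mp h2
  have hrp : IsRelPrime q (pt * lucas (m-1)) := by
    have h5 : IsRelPrime q pt := fun w hw1 hw2 =>
      relPrime_lucas_pt (m-1) (by rw [show m - 1 + 1 = m from by omega]; exact hw1.trans h1) hw2
    have h6 : IsRelPrime q (lucas (m-1)) := fun w hw1 hw2 =>
      relPrime_lucas_consec (m-1) hw2
        (by rw [show m - 1 + 1 = m from by omega]; exact hw1.trans h1)
    exact h5.mul_right h6
  exact hrp.dvd_of_dvd_mul_left h3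

lemma lucas_gcd_key : ∀ N m n : ℕ, m + n ≤ N → 0 < m → 0 < n →
    ∀ q : P2, q ∣ lucas m → q ∣ lucas n → q ∣ lucas (Nat.gcd m n) := by
  intro N
  induction N with
  | zero => intro m n h hm hn; omega
  | succ N IH =>
    intro m n hmn hm hn q h1 h2
    rcases lt_trichotomy m n with h | h | h
    · have hd := lucas_sub_step m n q hm h h1 h2
      have := IH m (n - m) (by omega) hm (by omega) q h1 hd
      rwa [Nat.gcd_sub_self_right (le_of_lt h)] at this
    · rw [h, Nat.gcd_self]; exact h2
    · have hd := lucas_sub_step n m q hn h h2 h1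
      have := IH n (m - n) (by omega) hn (by omega) q h2 hd
      rwa [Nat.gcd_sub_self_right (le_of_lt h), Nat.gcd_comm] at this

/-- {gcd(m,n)} is a gcd of {m} and {n} in ℤ[s,t]. -/
theorem lucas_gcd (m n : ℕ) (hm : 0 < m) (hn : 0 < n) :
    lucas (Nat.gcd m n) ∣ lucas m ∧ lucas (Nat.gcd m n) ∣ lucas n ∧
    ∀ q : P2, q ∣ lucas m → q ∣ lucas n → q ∣ lucas (Nat.gcd m n) := by
  obtain ⟨a, ha⟩ := Nat.gcd_dvd_left m n
  obtain ⟨b, hb⟩ := Nat.gcd_dvd_right m n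
  refine ⟨?_, ?_, fun q h1 h2 => lucas_gcd_key (m + n) m n le_rfl hm hn q h1 h2⟩
  · have := lucas_dvd_lucas_mul (Nat.gcd m n) a; rwa [← ha] at this
  · have := lucas_dvd_lucas_mul (Nat.gcd m n) b; rwa [← hb] at this
end
end
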